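/- Let A_1,...,A_K be n×n complex matrices such that the Hurwitz–Radon quadratic form Q(x) = Σ_{i≤j} x_i x_j d_{ij} (with d_{ij} = ‖A_iA_j^H + A_jA_i^H‖_F²) decomposes as Q(x) = Q_1(x_{Γ_1}) + Q_2(x_{Γ_2}) for a nontrivial partition {Γ_1, Γ_2} of {1,...,K} (i.e., d_{ij} = 0 for all i ∈ Γ_1, j ∈ Γ_2). Then for every channel matrix H, the Gram matrix H_eq^T H_eq of the equivalent channel is block-diagonal with respect to the partition {Γ_1, Γ_2}. -/

import Mathlib

open Matrix Finset Kronecker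

/-- The realification `Ȟ` of a complex channel matrix `H`. -/
def checkMat {nr n : ℕ} (H : Matrix (Fin nr) (Fin n) ℂ) :
    Matrix (Fin nr × Fin 2) (Fin n × Fin 2) ℝ := fun p q =>
  if p.2 = 0 then (if q.2 = 0 then (H p.1 q.1).re else -(H p.1 q.1).im)
  else (if q.2 = 0 then (H p.1 q.1).im else (H p.1 q.1).re)

/-- The generator matrix `G`: its `k`-th column is the realified vectorization of `A_k`. -/
def genMat {n K : ℕ} (A : Fin K → Matrix (Fin n) (Fin n) ℂ) :
    Matrix (Fin n × Fin n × Fin 2) (Fin K) ℝ := fun idx k =>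
  if idx.2.2 = 0 then (A k idx.2.1 idx.1).re else (A k idx.2.1 idx.1).im

/-- The equivalent real channel matrix `H_eq = (I_n ⊗ Ȟ)·G`. -/
def heqMat {nr n K : ℕ} (H : Matrix (Fin nr) (Fin n) ℂ)
    (A : Fin K → Matrix (Fin n) (Fin n) ℂ) :
    Matrix (Fin n × (Fin nr × Fin 2)) (Fin K) ℝ :=
  ((1 : Matrix (Fin n) (Fin n) ℝ) ⊗ₖ checkMat H) * genMat A

lemma heq_apply {nr n K : ℕ} (H : Matrix (Fin nr) (Fin n) ℂ)
    (A : Fin K → Matrix (Fin n) (Fin n) ℂ) (s : Fin n) (r : Fin nr) (t : Fin 2) (k : Fin K) :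
    heqMat H A (s, (r, t)) k =
      if t = 0 then ((H * A k) r s).re else ((H * A k) r s).im := by
  simp only [heqMat, Matrix.mul_apply, kroneckerMap_apply, Matrix.one_apply,
    Fintype.sum_prod_type, checkMat, genMat]
  simp only [ite_mul, one_mul, zero_mul]
  rw [Finset.sum_eq_single s (fun b _ hb => by simp [Ne.symm hb]) (by simp)]
  simp only [if_pos rfl]
  fin_cases t <;>
    simp [Fin.sum_univ_two, Matrix.mul_apply, Complex.re_sum, Complex.im_sum,
      Complex.mul_re, Complex.mul_im,] <;>
    first
      | exact Finset.sum_sub_distrib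
      | exact Finset.sum_congr rfl fun x _ => by ring
      | (rw [← Finset.sum_sub_distrib]; exact Finset.sum_congr rfl fun x _ => by ring)

/-- If the HRQF decomposes over a partition `{Γ_1, Γ_2}` of the variables
(`d_{ij} = 0` for `i ∈ Γ_1`, `j ∈ Γ_2`), then for every channel matrix `H` the
Gram matrix `H_eqᵀ H_eq` of the equivalent channel is block-diagonal with respect
to that partition. -/
theorem gram_matrix_block_diagonal_of_hrqf_decomposes {nr n K : ℕ}
    (A : Fin K → Matrix (Fin n) (Fin n) ℂ)
    (Γ : Fin K → Fin 2)
    (hΓ : (∃ i, Γ i = 0) ∧ (∃ j, Γ j = 1))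
    (hd : ∀ i j : Fin K, Γ i = 0 → Γ j = 1 →
      ∑ a, ∑ b, Complex.normSq ((A i * (A j)ᴴ + A j * (A i)ᴴ) a b) = 0)
    (H : Matrix (Fin nr) (Fin n) ℂ) :
    ∀ i j : Fin K, Γ i = 0 → Γ j = 1 →
      ((heqMat H A)ᵀ * heqMat H A) i j = 0 := by
  intro i j hi hj
  -- Step 1: the anticommutator vanishes.
  have hZ : A i * (A j)ᴴ + A j * (A i)ᴴ = 0 := by
    ext a b
    have h0 := hd i j hi hj
    have h1 : ∀ a ∈ (Finset.univ : Finset (Fin n)),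
        ∑ b, Complex.normSq ((A i * (A j)ᴴ + A j * (A i)ᴴ) a b) = 0 := by
      exact (Finset.sum_eq_zero_iff_of_nonneg
        (fun a _ => Finset.sum_nonneg fun b _ => Complex.normSq_nonneg _)).mp h0
    have h2 : ∀ b ∈ (Finset.univ : Finset (Fin n)),
        Complex.normSq ((A i * (A j)ᴴ + A j * (A i)ᴴ) a b) = 0 := by
      rw [← Finset.sum_eq_zero_iff_of_nonneg fun b _ => Complex.normSq_nonneg _]
      exact h1 a (Finset.mem_univ a)
    simpa using Complex.normSq_eq_zero.mp (h2 b (Finset.mem_univ b))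
  -- Step 2: C + Cᴴ = 0 where C = (H A_i)(H A_j)ᴴ.
  set C := (H * A i) * (H * A j)ᴴ with hC
  have hCC : C + Cᴴ = 0 := by
    have : C + Cᴴ = H * (A i * (A j)ᴴ + A j * (A i)ᴴ) * Hᴴ := by
      simp [hC, conjTranspose_mul, Matrix.mul_add, Matrix.add_mul, Matrix.mul_assoc]
    rw [this, hZ]
    simp
  have hre : ∀ r : Fin nr, (C r r).re = 0 := by
    intro r
    have := congrFun (congrFun hCC r) r
    simp only [Matrix.add_apply, Matrix.conjTranspose_apply, Matrix.zero_apply] at this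
    have := congrArg Complex.re this
    simp only [Complex.add_re, Complex.star_def, Complex.conj_re, Complex.zero_re] at this
    linarith
  -- Step 3: the Gram entry is ∑ r, (C r r).re.
  rw [Matrix.mul_apply]
  have key : ∑ x : Fin n × (Fin nr × Fin 2), (heqMat H A)ᵀ i x * heqMat H A x j
      = ∑ r : Fin nr, (C r r).re := by
    simp only [Matrix.transpose_apply, Fintype.sum_prod_type, Fin.sum_univ_two, heq_apply]
    simp only [if_pos rfl, if_neg (by decide : ¬ (1 : Fin 2) = 0)]
    rw [Finset.sum_comm]
    refine Finset.sum_congr rfl fun r _ => ?_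
    simp only [hC, Matrix.mul_apply, Matrix.conjTranspose_apply, Complex.re_sum, if_true,
      Complex.mul_re, Complex.star_def, Complex.conj_re, Complex.conj_im,
      ← Finset.sum_add_distrib]
    exact Finset.sum_congr rfl fun s _ => by ring
  rw [key]
  exact Finset.sum_eq_zero fun r _ => hre r
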